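/- Suppose i ≠ j, H(j,i) = 0, H(i,j) = 0, each diagonal block D(k) is Hermitian positive semidefinite, and there is an index k₀ such that for every k ≠ k₀ either H(k,j) = 0 or H(k,i) = 0, while H(k₀,j) = b_j • N and H(k₀,i) = b_i • N for some complex scalars b_j, b_i and some T×T complex matrix N. Then the (j,i) block of (I−H)^* D (I−H) equals (conj(b_j)·b_i) • (N^* D(k₀) N), the matrix N^* D(k₀) N is Hermitian positive semidefinite, and consequently every eigenvalue of this (j,i) block has the form (conj(b_j)·b_i)·r for some real r ≥ 0 (so all nonzero eigenvalues share the same argument, independent of the data). -/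

import Mathlib

open Matrix ComplexOrder

/-- The `(m·T) × (m·T)` block matrix with `(i,j)` block `H i j`. -/
def ofBlocks {m T : ℕ} (H : Fin m → Fin m → Matrix (Fin T) (Fin T) ℂ) :
    Matrix (Fin m × Fin T) (Fin m × Fin T) ℂ :=
  Matrix.of fun p q => H p.1 q.1 p.2 q.2

/-- The block-diagonal `(m·T) × (m·T)` matrix with diagonal blocks `D i`. -/
def blkDiag {m T : ℕ} (D : Fin m → Matrix (Fin T) (Fin T) ℂ) :
    Matrix (Fin m × Fin T) (Fin m × Fin T) ℂ :=
  Matrix.of fun p q => if p.1 = q.1 then D p.1 p.2 q.2 else 0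

/-- The `(i,j)` block (of size `T × T`) of an `(m·T) × (m·T)` matrix. -/
def blk {m T : ℕ} (A : Matrix (Fin m × Fin T) (Fin m × Fin T) ℂ) (i j : Fin m) :
    Matrix (Fin T) (Fin T) ℂ :=
  Matrix.of fun a b => A (i, a) (j, b)

lemma blk_conj_mul {m T : ℕ} (A B : Matrix (Fin m × Fin T) (Fin m × Fin T) ℂ)
    (D : Fin m → Matrix (Fin T) (Fin T) ℂ) (i j : Fin m) :
    blk (Aᴴ * blkDiag D * B) i j = ∑ k, (blk A k i)ᴴ * D k * blk B k j := by
  ext a b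
  simp only [blk, Matrix.of_apply, Matrix.mul_apply, Matrix.conjTranspose_apply, blkDiag,
    Finset.sum_apply, Matrix.sum_apply]
  rw [Fintype.sum_prod_type]
  refine Finset.sum_congr rfl fun k _ => ?_
  refine Finset.sum_congr rfl fun y _ => ?_
  congr 1
  rw [Fintype.sum_prod_type]
  simp [mul_ite, mul_zero, Finset.sum_ite_eq]

lemma blk_one {m T : ℕ} (k j : Fin m) :
    blk (1 : Matrix (Fin m × Fin T) (Fin m × Fin T) ℂ) k j =
      if k = j then 1 else 0 := by
  ext a b
  simp only [blk, Matrix.of_apply, Matrix.one_apply, Prod.mk.injEq]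
  by_cases h : k = j <;> by_cases h2 : a = b <;>
    simp [h, h2, Matrix.one_apply]

lemma blk_sub {m T : ℕ} (A B : Matrix (Fin m × Fin T) (Fin m × Fin T) ℂ) (i j : Fin m) :
    blk (A - B) i j = blk A i j - blk B i j := rfl

lemma blk_ofBlocks {m T : ℕ} (H : Fin m → Fin m → Matrix (Fin T) (Fin T) ℂ) (i j : Fin m) :
    blk (ofBlocks H) i j = H i j := rfl

lemma psd_spectrum_nonneg {T : ℕ} {M : Matrix (Fin T) (Fin T) ℂ}
    (hM : M.PosSemidef) {μ : ℂ} (hμ : μ ∈ spectrum ℂ M) :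
    ∃ r : ℝ, 0 ≤ r ∧ μ = r := by
  rw [← AlgEquiv.spectrum_eq (Matrix.toLinAlgEquiv' (R := ℂ) (n := Fin T))] at hμ
  have h := Module.End.hasEigenvalue_iff_mem_spectrum.mpr hμ
  obtain ⟨x, hx⟩ := h.exists_hasEigenvector
  have hMx : M *ᵥ x = μ • x := by
    have := hx.apply_eq_smul
    simpa [Matrix.toLinAlgEquiv'_apply, Matrix.toLin'_apply] using this
  have h1 := hM.dotProduct_mulVec_nonneg x
  rw [hMx] at h1
  have hdot : star x ⬝ᵥ (μ • x) = μ * (star x ⬝ᵥ x) := dotProduct_smul μ (star x) x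
  rw [hdot] at h1
  have h2 : (0:ℂ) < star x ⬝ᵥ x := Matrix.dotProduct_star_self_pos_iff.mpr hx.2
  set s := star x ⬝ᵥ x with hs
  have hsre : 0 < s.re ∧ s.im = 0 := by
    have := Complex.lt_def.mp h2
    exact ⟨by simpa using this.1, by simpa using this.2.symm⟩
  have h1' : 0 ≤ (μ * s).re ∧ (μ * s).im = 0 := by
    have := Complex.le_def.mp h1
    exact ⟨by simpa using this.1, by simpa using this.2.symm⟩
  refine ⟨(μ * s).re / s.re, div_nonneg h1'.1 hsre.1.le, ?_⟩
  have hsne : s ≠ 0 := ne_of_gt h2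
  have hseq : s = (s.re : ℂ) := by
    apply Complex.ext <;> simp [hsre.2]
  have hmu : μ * s = ((μ * s).re : ℂ) := by
    apply Complex.ext <;> simp [h1'.2]
  push_cast
  rw [← hmu, ← hseq, mul_div_assoc, div_self hsne, mul_one]

theorem strict_spouse_block_constant_phase {m T : ℕ}
    (H : Fin m → Fin m → Matrix (Fin T) (Fin T) ℂ)
    (hHdiag : ∀ i, H i i = 0)
    (D : Fin m → Matrix (Fin T) (Fin T) ℂ)
    (hD : ∀ k, (D k).PosSemidef)
    (i j : Fin m) (hij : i ≠ j)
    (hji : H j i = 0) (hijz : H i j = 0)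
    (k₀ : Fin m) (bj bi : ℂ) (N : Matrix (Fin T) (Fin T) ℂ)
    (honechild : ∀ k, k ≠ k₀ → H k j = 0 ∨ H k i = 0)
    (hkj : H k₀ j = bj • N) (hki : H k₀ i = bi • N) :
    blk ((1 - ofBlocks H)ᴴ * blkDiag D * (1 - ofBlocks H)) j i =
      (starRingEnd ℂ bj * bi) • (Nᴴ * D k₀ * N) ∧
    (Nᴴ * D k₀ * N).PosSemidef ∧
    ∀ μ ∈ spectrum ℂ (blk ((1 - ofBlocks H)ᴴ * blkDiag D * (1 - ofBlocks H)) j i),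
      ∃ r : ℝ, 0 ≤ r ∧ μ = (starRingEnd ℂ bj * bi) * r := by
  have hpsd : (Nᴴ * D k₀ * N).PosSemidef := (hD k₀).conjTranspose_mul_mul_same N
  have hblk : blk ((1 - ofBlocks H)ᴴ * blkDiag D * (1 - ofBlocks H)) j i =
      (starRingEnd ℂ bj * bi) • (Nᴴ * D k₀ * N) := by
    rw [blk_conj_mul]
    have hf : ∀ k, blk (1 - ofBlocks H) k j = (if k = j then 1 else 0) - H k j := by
      intro k; rw [blk_sub, blk_one, blk_ofBlocks]
    have hg : ∀ k, blk (1 - ofBlocks H) k i = (if k = i then 1 else 0) - H k i := by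
      intro k; rw [blk_sub, blk_one, blk_ofBlocks]
    rw [Finset.sum_eq_single_of_mem k₀ (Finset.mem_univ k₀)]
    · rw [hf, hg, hkj, hki]
      by_cases hkj' : k₀ = j
      · subst hkj'
        have hbj0 : bj • N = 0 := by rw [← hkj, hHdiag]
        have hbi0 : bi • N = 0 := by rw [← hki, hji]
        have hz : (starRingEnd ℂ bj * bi) • (Nᴴ * D k₀ * N) = 0 := by
          rw [mul_smul, ← Matrix.mul_smul, hbi0, Matrix.mul_zero, smul_zero]
        rw [hz]
        simp [Ne.symm hij, hbi0]
      · by_cases hki' : k₀ = i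
        · subst hki'
          have hbi0 : bi • N = 0 := by rw [← hki, hHdiag]
          have hbj0 : bj • N = 0 := by rw [← hkj, hijz]
          have hz : (starRingEnd ℂ bj * bi) • (Nᴴ * D k₀ * N) = 0 := by
            rw [mul_smul, ← Matrix.mul_smul, hbi0, Matrix.mul_zero, smul_zero]
          rw [hz]
          simp [hkj', hbj0]
        · rw [if_neg hkj', if_neg hki']
          simp only [zero_sub, conjTranspose_neg, Matrix.neg_mul, Matrix.mul_neg,
            neg_neg, conjTranspose_smul, Matrix.smul_mul, Matrix.mul_smul, smul_smul,
            smul_neg]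
          rw [mul_comm, starRingEnd_apply]
    · intro k _ hk
      rw [hf, hg]
      by_cases hkj' : k = j
      · subst hkj'
        simp [hji, Ne.symm hij]
      · by_cases hki' : k = i
        · subst hki'
          simp [hijz, hij]
        · rcases honechild k hk with h | h <;> simp [h, hkj', hki']
  refine ⟨hblk, hpsd, ?_⟩
  intro μ hμ
  rw [hblk] at hμ
  by_cases hc : starRingEnd ℂ bj * bi = 0
  · rw [hc, zero_smul] at hμ
    refine ⟨0, le_refl 0, ?_⟩
    rw [hc, zero_mul]
    by_contra hne
    rw [spectrum.mem_iff, sub_zero] at hμ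
    exact hμ ((isUnit_iff_ne_zero.mpr hne).map (algebraMap ℂ _))
  · rw [show (starRingEnd ℂ bj * bi) • (Nᴴ * D k₀ * N) =
        (Units.mk0 _ hc) • (Nᴴ * D k₀ * N) from rfl,
      spectrum.unit_smul_eq_smul] at hμ
    obtain ⟨ν, hν, hνμ⟩ := hμ
    obtain ⟨r, hr, hνr⟩ := psd_spectrum_nonneg hpsd hν
    exact ⟨r, hr, by rw [← hνμ, hνr]; simp [Units.smul_def]⟩
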